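/- The discriminant of s(q) = r q² − ((M−1)r + (r−1)λ' + 1) q + λ'(M−1)(r−1), viewed as a quadratic in q, is strictly positive for all r > 1, λ' > 0, and M ≥ 2; hence s(q) = 0 has two distinct real roots. -/

import Mathlib

/-- The discriminant of `s(q) = rq² − ((M−1)r + (r−1)λ' + 1)q + λ'(M−1)(r−1)` is
strictly positive for `r > 1`, `λ' > 0`, `M ≥ 2`; hence `s` has two distinct real roots. -/
theorem stmt8 (M : ℕ) (hM : 2 ≤ M) (r lam : ℝ) (hr : 1 < r) (hlam : 0 < lam) :
    0 < (((M : ℝ) - 1) * r + (r - 1) * lam + 1) ^ 2 -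
        4 * r * (lam * ((M : ℝ) - 1) * (r - 1)) ∧
    ∃ q₁ q₂ : ℝ, q₁ ≠ q₂ ∧
      r * q₁ ^ 2 - (((M : ℝ) - 1) * r + (r - 1) * lam + 1) * q₁ +
        lam * ((M : ℝ) - 1) * (r - 1) = 0 ∧
      r * q₂ ^ 2 - (((M : ℝ) - 1) * r + (r - 1) * lam + 1) * q₂ +
        lam * ((M : ℝ) - 1) * (r - 1) = 0 := by
  have hM1 : (1 : ℝ) ≤ (M : ℝ) - 1 := by
    have : (2 : ℝ) ≤ (M : ℝ) := by exact_mod_cast hM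
    linarith
  set b : ℝ := ((M : ℝ) - 1) * r + (r - 1) * lam + 1 with hb
  set c : ℝ := lam * ((M : ℝ) - 1) * (r - 1) with hc
  have hA : 0 < ((M : ℝ) - 1) * r := by nlinarith
  have hB : 0 < (r - 1) * lam := by nlinarith
  have hΔ : 0 < b ^ 2 - 4 * r * c := by
    have : b ^ 2 - 4 * r * c =
        (((M : ℝ) - 1) * r - (r - 1) * lam) ^ 2 +
          2 * (((M : ℝ) - 1) * r) + 2 * ((r - 1) * lam) + 1 := by
      rw [hb, hc]; ring
    nlinarith [sq_nonneg (((M : ℝ) - 1) * r - (r - 1) * lam)]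
  refine ⟨hΔ, ?_⟩
  have hrpos : (0 : ℝ) < r := by linarith
  have hs : 0 < Real.sqrt (b ^ 2 - 4 * r * c) := Real.sqrt_pos.mpr hΔ
  have hsq : Real.sqrt (b ^ 2 - 4 * r * c) ^ 2 = b ^ 2 - 4 * r * c :=
    Real.sq_sqrt hΔ.le
  refine ⟨(b + Real.sqrt (b ^ 2 - 4 * r * c)) / (2 * r),
    (b - Real.sqrt (b ^ 2 - 4 * r * c)) / (2 * r), ?_, ?_, ?_⟩
  · intro h
    have : Real.sqrt (b ^ 2 - 4 * r * c) = 0 := by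
      field_simp at h; linarith
    linarith
  · field_simp
    nlinarith [hsq, Real.sq_sqrt (show (0:ℝ) ≤ b ^ 2 - r * 4 * c by linarith)]
  · field_simp
    nlinarith [hsq, Real.sq_sqrt (show (0:ℝ) ≤ b ^ 2 - r * 4 * c by linarith)]
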